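/- Let V be a finite vertex set, let T = (V, E) be a tree on V, and let λ : V × V → ℝ be a symmetric weight function such that for every triple of distinct vertices a, u, b ∈ V with u an internal vertex of the unique path in T from a to b, the strict inequality λ(a, b) < min(λ(a, u), λ(u, b)) holds. Then T is the unique maximizer of the edge-weight sum: for every tree T′ = (V, E′) on V with T′ ≠ T, one has Σ_{{u,v}∈E} λ(u, v) > Σ_{{u′,v′}∈E′} λ(u′, v′). -/

import Mathlib

open SimpleGraph Finset

private lemma aux_cross_edge {V : Type*} {G : SimpleGraph V} (P : V → Prop) :
    ∀ {x y : V}, ∀ p : G.Walk x y, P x → ¬ P y →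
      ∃ u v, s(u, v) ∈ p.edges ∧ P u ∧ ¬ P v := by
  intro x y p
  induction p with
  | nil => exact fun h h' => absurd h h'
  | @cons x c y h q ih =>
    intro hx hy
    by_cases hc : P c
    · obtain ⟨u, v, hm, h1, h2⟩ := ih hc hy
      exact ⟨u, v, by simp [hm], h1, h2⟩
    · exact ⟨x, c, by simp, hx, hc⟩

private lemma aux_reach {V : Type*} {G : SimpleGraph V} {a b : V} :
    ∀ {x y : V}, ∀ _ : G.Walk x y,
      ((G.deleteEdges {s(a, b)}).Reachable y a ∨ (G.deleteEdges {s(a, b)}).Reachable y b) →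
      ((G.deleteEdges {s(a, b)}).Reachable x a ∨ (G.deleteEdges {s(a, b)}).Reachable x b) := by
  intro x y p
  induction p with
  | nil => exact id
  | @cons x c y h q ih =>
    intro hy
    by_cases he : s(x, c) = s(a, b)
    · rw [Sym2.eq_iff] at he
      rcases he with ⟨rfl, rfl⟩ | ⟨rfl, rfl⟩
      · exact Or.inl (Reachable.refl _)
      · exact Or.inr (Reachable.refl _)
    · have hadj : (G.deleteEdges {s(a, b)}).Adj x c := by
        rw [SimpleGraph.deleteEdges_adj]
        exact ⟨h, by simpa using he⟩
      rcases ih hy with h' | h'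
      · exact Or.inl (hadj.reachable.trans h')
      · exact Or.inr (hadj.reachable.trans h')

private lemma aux_weight {V : Type*} {T : SimpleGraph V} (hT : T.IsTree)
    (w : V → V → ℝ) (hsym : ∀ u v, w u v = w v u)
    (hpath : ∀ a u b : V, a ≠ u → u ≠ b → a ≠ b →
      ∀ p : T.Walk a b, p.IsPath → u ∈ p.support → w a b < min (w a u) (w u b)) :
    ∀ {a b : V} (p : T.Walk a b), p.IsPath → a ≠ b → ¬ T.Adj a b →
      ∀ e ∈ p.edges, w a b < Sym2.lift ⟨w, hsym⟩ e := by
  intro a b p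
  induction p with
  | nil => simp
  | @cons a c b h q ih =>
    intro hp hab hnadj e he
    rw [SimpleGraph.Walk.cons_isPath_iff] at hp
    have hq : q.IsPath := hp.1
    have hac : a ≠ c := h.ne
    have hcb : c ≠ b := by rintro rfl; exact hnadj h
    have hint : w a b < min (w a c) (w c b) :=
      hpath a c b hac hcb hab (Walk.cons h q) ((SimpleGraph.Walk.cons_isPath_iff h q).mpr hp)
        (by simp)
    rw [SimpleGraph.Walk.edges_cons, List.mem_cons] at he
    rcases he with rfl | he
    · simpa using hint.trans_le (min_le_left _ _)
    · by_cases hadj : T.Adj c b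
      · have hq1 : q = Walk.cons hadj Walk.nil := by
          have := hT.IsAcyclic.path_unique ⟨q, hq⟩ (Path.singleton hadj)
          simpa [Path.singleton] using congrArg Subtype.val this
        rw [hq1] at he
        simp only [SimpleGraph.Walk.edges_cons, SimpleGraph.Walk.edges_nil,
          List.mem_singleton, List.mem_cons, List.not_mem_nil, or_false] at he
        subst he
        simpa using hint.trans_le (min_le_right _ _)
      · exact (hint.trans_le (min_le_right _ _)).trans (ih hq hcb hadj e he)

private lemma aux_tree_eq {V : Type*} [Fintype V] [DecidableEq (Sym2 V)]
    {T T' : SimpleGraph V} [Fintype T.edgeSet] [Fintype T'.edgeSet]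
    (hT : T.IsTree) (hT' : T'.IsTree)
    (h : T'.edgeFinset \ T.edgeFinset = ∅) : T' = T := by
  rw [Finset.sdiff_eq_empty_iff_subset] at h
  have h1 := hT.card_edgeFinset
  have h2 := hT'.card_edgeFinset
  have hcard : T.edgeFinset.card ≤ T'.edgeFinset.card := by omega
  have := Finset.eq_of_subset_of_card_le h hcard
  rwa [edgeFinset_inj] at this

private lemma aux_main {V : Type*} [Fintype V] [DecidableEq V] [DecidableEq (Sym2 V)]
    {T : SimpleGraph V} [Fintype T.edgeSet]
    (hT : T.IsTree) (w : V → V → ℝ) (hsym : ∀ u v, w u v = w v u)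
    (hpath : ∀ a u b : V, a ≠ u → u ≠ b → a ≠ b →
      ∀ p : T.Walk a b, p.IsPath → u ∈ p.support → w a b < min (w a u) (w u b)) :
    ∀ (k : ℕ) (T' : SimpleGraph V) [Fintype T'.edgeSet], T'.IsTree → T' ≠ T →
      (T'.edgeFinset \ T.edgeFinset).card ≤ k →
      ∑ e ∈ T'.edgeFinset, Sym2.lift ⟨w, hsym⟩ e <
        ∑ e ∈ T.edgeFinset, Sym2.lift ⟨w, hsym⟩ e := by
  intro k
  induction k with
  | zero =>
    intro T' _ hT' hne hcard
    exact absurd (aux_tree_eq hT hT' (Finset.card_eq_zero.mp (Nat.le_zero.mp hcard))) hne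
  | succ k ih =>
    intro T' instT' hT' hne hcard
    -- pick an edge of T' not in T
    have hnonempty : (T'.edgeFinset \ T.edgeFinset).Nonempty := by
      rcases Finset.eq_empty_or_nonempty (T'.edgeFinset \ T.edgeFinset) with h | h
      · exact absurd (aux_tree_eq hT hT' h) hne
      · exact h
    obtain ⟨e', he'⟩ := hnonempty
    revert he'
    induction e' using Sym2.ind with
    | _ a b =>
    intro he'
    rw [Finset.mem_sdiff, mem_edgeFinset, mem_edgeFinset] at he'
    have hab' : T'.Adj a b := he'.1
    have hnab : ¬ T.Adj a b := fun h => he'.2 h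
    have hne_ab : a ≠ b := hab'.ne
    -- the bridge fact
    have hbr : T'.IsBridge s(a, b) :=
      (isAcyclic_iff_forall_adj_isBridge.mp hT'.2) hab'
    have hnr : ¬ (T'.deleteEdges {s(a, b)}).Reachable a b := isBridge_iff.mp hbr
    -- path in T from a to b
    obtain ⟨p0⟩ := hT.isConnected.preconnected a b
    let pp : T.Path a b := p0.toPath
    have hp : (pp : T.Walk a b).IsPath := pp.2
    -- crossing edge
    obtain ⟨u, v, hmem, hu, hv⟩ := aux_cross_edge
      (fun x => (T'.deleteEdges {s(a, b)}).Reachable x a) (pp : T.Walk a b)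
      (Reachable.refl a) (fun h => hnr h.symm)
    have huv_T : T.Adj u v := (pp : T.Walk a b).adj_of_mem_edges hmem
    have hne_uv : u ≠ v := huv_T.ne
    have hne_e : s(u, v) ≠ s(a, b) := by
      intro h
      apply hnab
      have : s(a, b) ∈ T.edgeSet := h ▸ (T.mem_edgeSet.mpr huv_T)
      exact T.mem_edgeSet.mp this
    have huv_not_T' : ¬ T'.Adj u v := by
      intro h
      have hGadj : (T'.deleteEdges {s(a, b)}).Adj u v :=
        SimpleGraph.deleteEdges_adj.mpr ⟨h, by simpa using hne_e⟩
      exact hv (hGadj.symm.reachable.trans hu)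
    have hwlt : w a b < w u v := by
      simpa using aux_weight hT w hsym hpath (pp : T.Walk a b) hp hne_ab hnab s(u, v) hmem
    -- the exchanged graph
    set T'' : SimpleGraph V := T'.deleteEdges {s(a, b)} ⊔ SimpleGraph.edge u v with hT''def
    have hE''set : T''.edgeSet = (T'.edgeSet \ {s(a, b)}) ∪ {s(u, v)} := by
      rw [hT''def, edgeSet_sup, edgeSet_deleteEdges, edge_edgeSet_of_ne hne_uv]
    -- connectivity
    have hGle : T'.deleteEdges {s(a, b)} ≤ T'' := le_sup_left
    have hD : ∀ x : V, (T'.deleteEdges {s(a, b)}).Reachable x a ∨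
        (T'.deleteEdges {s(a, b)}).Reachable x b := by
      intro x
      obtain ⟨q⟩ := hT'.isConnected.preconnected x a
      exact aux_reach q (Or.inl (Reachable.refl a))
    have hvb : (T'.deleteEdges {s(a, b)}).Reachable v b := (hD v).resolve_left hv
    have hedge_adj : T''.Adj u v := by
      have h0 : (SimpleGraph.edge u v).Adj u v := by
        rw [edge_adj]; exact ⟨Or.inl ⟨rfl, rfl⟩, hne_uv⟩
      exact (le_sup_right : SimpleGraph.edge u v ≤ T'') h0
    have hba : T''.Reachable b a :=
      ((hvb.mono hGle).symm.trans (hedge_adj.symm.reachable)).trans (hu.mono hGle)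
    have hxa : ∀ x : V, T''.Reachable x a := by
      intro x
      rcases hD x with h' | h'
      · exact h'.mono hGle
      · exact (h'.mono hGle).trans hba
    have hconn : T''.Connected := by
      rw [connected_iff]
      exact ⟨fun x y => (hxa x).trans (hxa y).symm, hT.isConnected.nonempty⟩
    -- acyclicity
    have hdel_le : T''.deleteEdges {s(u, v)} ≤ T'.deleteEdges {s(a, b)} := by
      rw [← edgeSet_subset_edgeSet, edgeSet_deleteEdges, hE''set, edgeSet_deleteEdges]
      intro e he
      rcases he with ⟨he1 | he1, he2⟩
      · exact he1
      · exact absurd he1 he2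
    have hbr'' : T''.IsBridge s(u, v) := by
      rw [isBridge_iff]
      intro h
      have : (T'.deleteEdges {s(a, b)}).Reachable u v := h.mono hdel_le
      exact hv (this.symm.trans hu)
    have hacyc : T''.IsAcyclic := by
      intro x c hc
      by_cases hmem_uv : s(u, v) ∈ c.edges
      · exact hbr''.notMem_edges_of_isCycle hc hmem_uv
      · have hsub : ∀ e ∈ c.edges, e ∈ T'.edgeSet := by
          intro e he
          have := c.edges_subset_edgeSet he
          rw [hE''set] at this
          rcases this with h' | h'
          · exact h'.1
          · rw [Set.mem_singleton_iff] at h'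
            exact absurd (h' ▸ he) hmem_uv
        exact hT'.2 (c.transfer T' hsub) (hc.transfer hsub)
    have htree'' : T''.IsTree := ⟨hconn, hacyc⟩
    have instT'' : Fintype T''.edgeSet := (T''.edgeSet.toFinite).fintype
    -- edge finset computation
    have hab_mem : s(a, b) ∈ T'.edgeFinset := mem_edgeFinset.mpr hab'
    have huvN : s(u, v) ∉ T'.edgeFinset := fun h => huv_not_T' (mem_edgeFinset.mp h)
    have hE''fin : T''.edgeFinset = insert s(u, v) (T'.edgeFinset.erase s(a, b)) := by
      ext e
      simp only [mem_edgeFinset, hE''set, Set.mem_union, Set.mem_diff,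
        Set.mem_singleton_iff, Finset.mem_insert, Finset.mem_erase, mem_edgeFinset]
      tauto
    have hsum'' : ∑ e ∈ T''.edgeFinset, Sym2.lift ⟨w, hsym⟩ e =
        w u v + (∑ e ∈ T'.edgeFinset, Sym2.lift ⟨w, hsym⟩ e - w a b) := by
      rw [hE''fin, Finset.sum_insert (fun h => huvN (Finset.mem_of_mem_erase h)),
        Finset.sum_erase_eq_sub hab_mem]
      simp
    have hlt'' : ∑ e ∈ T'.edgeFinset, Sym2.lift ⟨w, hsym⟩ e <
        ∑ e ∈ T''.edgeFinset, Sym2.lift ⟨w, hsym⟩ e := by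
      rw [hsum'']; linarith
    -- measure
    have huvT : s(u, v) ∈ T.edgeFinset := mem_edgeFinset.mpr huv_T
    have hcard'' : (T''.edgeFinset \ T.edgeFinset).card ≤ k := by
      have hsub2 : T''.edgeFinset \ T.edgeFinset ⊆
          (T'.edgeFinset \ T.edgeFinset).erase s(a, b) := by
        intro e he
        rw [Finset.mem_sdiff, hE''fin, Finset.mem_insert, Finset.mem_erase] at he
        rcases he with ⟨h1 | ⟨h2, h3⟩, h4⟩
        · exact absurd (h1 ▸ huvT) h4
        · exact Finset.mem_erase.mpr ⟨h2, Finset.mem_sdiff.mpr ⟨h3, h4⟩⟩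
      calc (T''.edgeFinset \ T.edgeFinset).card
          ≤ ((T'.edgeFinset \ T.edgeFinset).erase s(a, b)).card := Finset.card_le_card hsub2
        _ = (T'.edgeFinset \ T.edgeFinset).card - 1 := by
            rw [Finset.card_erase_of_mem (Finset.mem_sdiff.mpr ⟨hab_mem, fun h => he'.2 (mem_edgeFinset.mp h)⟩)]
        _ ≤ k := by omega
    by_cases hTT : T'' = T
    · have : ∑ e ∈ T''.edgeFinset, Sym2.lift ⟨w, hsym⟩ e =
          ∑ e ∈ T.edgeFinset, Sym2.lift ⟨w, hsym⟩ e := by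
        congr 1
        ext e
        simp [mem_edgeFinset, hTT]
      rwa [this] at hlt''
    · exact hlt''.trans (ih T'' htree'' hTT hcard'')

/-- If `T` is a tree on a finite vertex set `V` and `w` is a symmetric weight function
such that `w a b < min (w a u) (w u b)` whenever `u` is an internal vertex of the unique
path in `T` from `a` to `b`, then `T` is the unique maximizer of the edge-weight sum:
any other tree `T' ≠ T` on `V` has strictly smaller edge-weight sum. -/
theorem tree_unique_max_weight_sum
    {V : Type*} [Fintype V] {T T' : SimpleGraph V}
    [Fintype T.edgeSet] [Fintype T'.edgeSet]
    (hT : T.IsTree) (hT' : T'.IsTree)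
    (w : V → V → ℝ) (hsym : ∀ u v, w u v = w v u)
    (hpath : ∀ a u b : V, a ≠ u → u ≠ b → a ≠ b →
      ∀ p : T.Walk a b, p.IsPath → u ∈ p.support →
        w a b < min (w a u) (w u b))
    (hne : T' ≠ T) :
    ∑ e ∈ T'.edgeFinset, Sym2.lift ⟨w, hsym⟩ e <
      ∑ e ∈ T.edgeFinset, Sym2.lift ⟨w, hsym⟩ e := by
  classical
  exact aux_main hT w hsym hpath (T'.edgeFinset \ T.edgeFinset).card T' hT' hne le_rfl
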